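/- If t vertices of a graph G all have the same open neighborhood and t >= 2, then every identifying code of G contains at least t - 1 of these vertices. -/
import Mathlib

open SimpleGraph

/-- The closed neighborhood of a vertex. -/
def cnbr {V : Type*} (G : SimpleGraph V) (v : V) : Set V := insert v (G.neighborSet v)

/-- `C` is an identifying code of `G`: every vertex is dominated by `C` and the
closed-neighborhood traces on `C` are pairwise distinct. -/
def IsIdCode {V : Type*} (G : SimpleGraph V) (C : Set V) : Prop :=
  (∀ v, (cnbr G v ∩ C).Nonempty) ∧
  ∀ u v : V, cnbr G u ∩ C = cnbr G v ∩ C → u = v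

/-- The minimum size of an identifying code of `G`. -/
noncomputable def gammaID {V : Type*} (G : SimpleGraph V) : ℕ :=
  sInf {n | ∃ C : Set V, IsIdCode G C ∧ C.ncard = n}

theorem stmt_2 {V : Type*} (G : SimpleGraph V) (T : Finset V) (t : ℕ)
    (hcard : T.card = t) (ht : 2 ≤ t)
    (htwins : ∀ u ∈ T, ∀ v ∈ T, G.neighborSet u = G.neighborSet v)
    (C : Set V) (hC : IsIdCode G C) :
    t - 1 ≤ ((T : Set V) ∩ C).ncard := by
  have hsub : ((T : Set V) \ C).Subsingleton := by
    intro u hu v hv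
    apply hC.2
    have hnb : G.neighborSet u = G.neighborSet v := htwins u hu.1 v hv.1
    have key : ∀ w : V, w ∉ C → cnbr G w ∩ C = G.neighborSet w ∩ C := by
      intro w hw
      ext x
      simp only [cnbr, Set.mem_inter_iff, Set.mem_insert_iff]
      constructor
      · rintro ⟨h1 | h1, h2⟩
        · exact absurd (h1 ▸ h2) hw
        · exact ⟨h1, h2⟩
      · rintro ⟨h1, h2⟩; exact ⟨Or.inr h1, h2⟩
    rw [key u hu.2, key v hv.2, hnb]
  have hfin : ((T : Set V)).Finite := T.finite_toSet
  have heq := Set.ncard_inter_add_ncard_diff_eq_ncard (T : Set V) C hfin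
  have hle : ((T : Set V) \ C).ncard ≤ 1 :=
    (Set.encard_le_coe_iff_finite_ncard_le.mp
      (by exact_mod_cast Set.encard_le_one_iff.mpr (fun a b ha hb => hsub ha hb))).2
  have hT : (T : Set V).ncard = t := by rw [Set.ncard_coe_finset, hcard]
  omega
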